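/- Theorem 2.5(iii) (Q-based cocoercivity of I − T): Assume 2ν > β. Let x₁, x₂, y₁, y₂ ∈ H satisfy Q xᵢ − B xᵢ − Q yᵢ ∈ A yᵢ for i = 1, 2 (i.e. yᵢ = T xᵢ), and set rᵢ := xᵢ − yᵢ. Then 4ν · ⟪Q (x₁ − x₂), r₁ − r₂⟫ ≥ (4ν − β) · ⟪Q (r₁ − r₂), r₁ − r₂⟫; i.e. I − T is Q-based (1 − β/(4ν))-cocoercive. -/

import Mathlib

open RealInnerProductSpace


private lemma stmt5_aux_cs (s c a : ℝ) (hd : 2 * c * (2 * c) - 4 * s * a ≤ 0) :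
    c ^ 2 ≤ a * s := by nlinarith

private lemma stmt5_aux_nuc (ν a s c m : ℝ) (hν : 0 ≤ ν) (hs : 0 ≤ s)
    (ham : ν * a ≤ m) (hCS : c ^ 2 ≤ a * s) : ν * c ^ 2 ≤ m * s := by
  nlinarith [mul_le_mul_of_nonneg_right ham hs, mul_le_mul_of_nonneg_left hCS hν]

private lemma stmt5_aux_final (ν β s c m P T : ℝ) (hν : 0 < ν) (hβ : 0 < β)
    (hs : 0 ≤ s) (hm : 0 ≤ m) (hνc2 : ν * c ^ 2 ≤ m * s)
    (hP : m ≤ β * P) (h2 : s + (P - c) ≤ T) :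
    (4 * ν - β) * s ≤ 4 * ν * T := by
  have hX : 0 ≤ 4 * ν * m + β ^ 2 * s := by positivity
  have hsq : (4 * ν * β * c) ^ 2 ≤ (4 * ν * m + β ^ 2 * s) ^ 2 := by
    nlinarith [sq_nonneg (4 * ν * m - β ^ 2 * s),
      mul_le_mul_of_nonneg_left hνc2 (show (0:ℝ) ≤ 16 * ν * β ^ 2 by positivity)]
  have hfin : 4 * ν * β * c ≤ 4 * ν * m + β ^ 2 * s := by
    nlinarith [hsq, hX]
  nlinarith [mul_pos hν hβ]

set_option maxHeartbeats 1000000 in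
/-- Theorem 2.5(iii): `I − T` is `Q`-based `(1 − β/(4ν))`-cocoercive. -/
theorem stmt_5
    {H : Type*} [NormedAddCommGroup H] [InnerProductSpace ℝ H] [CompleteSpace H]
    (Q : H →L[ℝ] H)
    (hQsym : ∀ x y : H, ⟪Q x, y⟫ = ⟪x, Q y⟫)
    (hQpos : ∀ x : H, 0 ≤ ⟪Q x, x⟫)
    (ν : ℝ) (hν : 0 < ν)
    (hνQ : ∀ w ∈ (LinearMap.ker (Q : H →ₗ[ℝ] H))ᗮ, ν * ‖w‖ ≤ ‖Q w‖)
    (β : ℝ) (hβ : 0 ≤ β)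
    (hνβ : β < 2 * ν)
    (B : H → H)
    (hB : ∀ x y : H, ‖B x - B y‖ ^ 2 ≤ β * ⟪B x - B y, x - y⟫)
    (hranB : Set.range B ⊆ Set.range Q)
    (A : H → Set H)
    (hA : ∀ x y u v : H, u ∈ A x → v ∈ A y → 0 ≤ ⟪u - v, x - y⟫)
    (x₁ x₂ y₁ y₂ : H)
    (hy₁ : Q x₁ - B x₁ - Q y₁ ∈ A y₁)
    (hy₂ : Q x₂ - B x₂ - Q y₂ ∈ A y₂)
    (r₁ r₂ : H) (hr₁ : r₁ = x₁ - y₁) (hr₂ : r₂ = x₂ - y₂) :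
    (4 * ν - β) * ⟪Q (r₁ - r₂), r₁ - r₂⟫ ≤ 4 * ν * ⟪Q (x₁ - x₂), r₁ - r₂⟫ := by
  subst hr₁ hr₂
  set x : H := x₁ - x₂ with hxdef
  set b : H := B x₁ - B x₂ with hbdef
  set r : H := (x₁ - y₁) - (x₂ - y₂) with hrdef
  have hry : y₁ - y₂ = x - r := by rw [hrdef, hxdef]; abel
  -- monotonicity
  have hmono := hA y₁ y₂ _ _ hy₁ hy₂
  have h1 : 0 ≤ ⟪Q r - b, x - r⟫ := by
    rw [← hry]
    convert hmono using 2
    rw [hrdef, hbdef]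
    simp only [map_sub]
    abel
  set s : ℝ := ⟪Q r, r⟫ with hsdef
  have hs0 : 0 ≤ s := hQpos r
  have h5 : ⟪Q r, x⟫ = ⟪Q x, r⟫ := (hQsym r x).trans (real_inner_comm r (Q x)).symm
  have hsubr : ⟪Q r - b, x - r⟫ = ⟪Q x, r⟫ - s - (⟪b, x⟫ - ⟪b, r⟫) := by
    have e1 := inner_sub_left (𝕜 := ℝ) (Q r) b (x - r)
    have e2 := inner_sub_right (𝕜 := ℝ) (Q r) x r
    have e3 := inner_sub_right (𝕜 := ℝ) b x r
    rw [e1, e2, e3, h5, hsdef]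
  have h2 : s + (⟪b, x⟫ - ⟪b, r⟫) ≤ ⟪Q x, r⟫ := by
    rw [hsubr] at h1; linarith
  -- cocoercivity
  have hcoco : ‖b‖ ^ 2 ≤ β * ⟪b, x⟫ := hB x₁ x₂
  set c : ℝ := ⟪b, r⟫ with hcdef
  set P : ℝ := ⟪b, x⟫ with hPdef
  set T : ℝ := ⟪Q x, r⟫ with hTdef
  rcases eq_or_lt_of_le hβ with hβ0 | hβpos
  · -- β = 0 : b = 0
    have hb0 : b = 0 := by
      have h6 : ‖b‖ ^ 2 ≤ 0 := by rw [← hβ0] at hcoco; linarith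
      have h7 := sq_nonneg ‖b‖
      have hn : ‖b‖ = 0 := by nlinarith
      simpa using hn
    have hc0 : c = 0 := by rw [hcdef, hb0, inner_zero_left]
    have hP0 : P = 0 := by rw [hPdef, hb0, inner_zero_left]
    rw [hc0, hP0] at h2
    clear_value s T
    nlinarith
  · -- β > 0
    obtain ⟨u₁, hu₁⟩ := hranB (Set.mem_range_self x₁)
    obtain ⟨u₂, hu₂⟩ := hranB (Set.mem_range_self x₂)
    have hKc : IsClosed ((LinearMap.ker (Q : H →ₗ[ℝ] H) : Submodule ℝ H) : Set H) :=
      ContinuousLinearMap.isClosed_ker Q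
    haveI : CompleteSpace (LinearMap.ker (Q : H →ₗ[ℝ] H) : Submodule ℝ H) := hKc.completeSpace_coe
    obtain ⟨k, hk, p, hp, hw⟩ :=
      (LinearMap.ker (Q : H →ₗ[ℝ] H) : Submodule ℝ H).exists_add_mem_mem_orthogonal (u₁ - u₂)
    have hQk : Q k = 0 := hk
    have hbQp : b = Q p := by
      rw [hbdef, ← hu₁, ← hu₂, ← map_sub, hw, map_add, hQk, zero_add]
    have hνp := hνQ p hp
    set a : ℝ := ⟪Q p, p⟫ with hadef
    have ha0 : 0 ≤ a := hQpos p
    set m : ℝ := ‖b‖ ^ 2 with hmdef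
    have hm0 : 0 ≤ m := sq_nonneg _
    have ham : ν * a ≤ m := by
      have h3 : a ≤ ‖Q p‖ * ‖p‖ := real_inner_le_norm _ _
      have h4 : ν * ‖p‖ ≤ ‖Q p‖ := hνp
      have hnp : 0 ≤ ‖p‖ := norm_nonneg _
      have hnQp : 0 ≤ ‖Q p‖ := norm_nonneg _
      have hmm : m = ‖Q p‖ ^ 2 := by rw [hmdef, hbQp]
      rw [hmm]
      nlinarith
    clear_value s c P T a m
    -- Cauchy-Schwarz in Q-seminorm: c^2 ≤ a * s
    have hCS : c ^ 2 ≤ a * s := by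
      have hquad : ∀ t : ℝ, 0 ≤ s * (t * t) + (2 * c) * t + a := by
        intro t
        have h0 := hQpos (p + t • r)
        have hc' : ⟪Q p, r⟫ = c := by rw [hcdef, hbQp]
        have hsym : ⟪Q r, p⟫ = ⟪Q p, r⟫ := (hQsym r p).trans (real_inner_comm r (Q p)).symm
        have hexp : ⟪Q (p + t • r), p + t • r⟫ = s * (t * t) + (2 * c) * t + a := by
          simp only [map_add, map_smul, inner_add_left, inner_add_right,
            real_inner_smul_left, real_inner_smul_right]
          rw [hsym, hc', ← hsdef, ← hadef]
          ring
        linarith [hexp ▸ h0]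
      have hd := discrim_le_zero hquad
      rw [discrim, sq] at hd
      exact stmt5_aux_cs s c a hd
    -- final arithmetic
    have hP : m ≤ β * P := hcoco
    have hνc2 : ν * c ^ 2 ≤ m * s := stmt5_aux_nuc ν a s c m hν.le hs0 ham hCS
    exact stmt5_aux_final ν β s c m P T hν hβpos hs0 hm0 hνc2 hP h2
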